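/- Hölder bound on trilinear solution count: for finite nonempty sets A, B, C of reals and any nonzero reals σ₁, σ₂, σ₃, the number of triples (a,b,c) ∈ A×B×C with σ₁a + σ₂b + σ₃c = 0 is at most |C|^{3/4}·(d₄⁺(A)·|A|·|B|³)^{1/4}. -/

import Mathlib

open Finset Pointwise BigOperators

noncomputable section

/-- number of pairs (a,b) ∈ A×B with a - b = x -/
def rsub (A B : Finset ℝ) (x : ℝ) : ℕ :=
  ((A ×ˢ B).filter (fun p => p.1 - p.2 = x)).card

/-- number of pairs (a,b) ∈ A×B with a = x*b -/
def rdiv (A B : Finset ℝ) (x : ℝ) : ℕ :=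
  ((A ×ˢ B).filter (fun p => p.1 = x * p.2)).card

/-- additive energy E⁺(A,B) = Σ_x r_{A−B}(x)² -/
def Eplus (A B : Finset ℝ) : ℕ := ∑ x ∈ A - B, (rsub A B x) ^ 2

/-- multiplicative energy E^×(A,B) = Σ_x r_{A/B}(x)² -/
def Etimes (A B : Finset ℝ) : ℕ := ∑ x ∈ A / B, (rdiv A B x) ^ 2

/-- third additive energy -/
def E3plus (A B : Finset ℝ) : ℕ := ∑ x ∈ A - B, (rsub A B x) ^ 3

/-- third multiplicative energy -/
def E3times (A B : Finset ℝ) : ℕ := ∑ x ∈ A / B, (rdiv A B x) ^ 3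

/-- fourth additive energy -/
def E4plus (A B : Finset ℝ) : ℕ := ∑ x ∈ A - B, (rsub A B x) ^ 4

/-- d⁺(A) -/
def dplus (A : Finset ℝ) : ℝ :=
  ⨆ B : {B : Finset ℝ // B.Nonempty}, (E3plus A B.1 : ℝ) / (A.card * (B.1.card : ℝ) ^ 2)

/-- d^×(A) -/
def dtimes (A : Finset ℝ) : ℝ :=
  ⨆ B : {B : Finset ℝ // B.Nonempty}, (E3times A B.1 : ℝ) / (A.card * (B.1.card : ℝ) ^ 2)

/-- d₄⁺(A) -/
def d4plus (A : Finset ℝ) : ℝ :=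
  ⨆ B : {B : Finset ℝ // B.Nonempty}, (E4plus A B.1 : ℝ) / (A.card * (B.1.card : ℝ) ^ 3)

end
section aux

lemma rsub_le_left (A B : Finset ℝ) (x : ℝ) : rsub A B x ≤ A.card := by
  apply Finset.card_le_card_of_injOn (fun p => p.1)
  · intro p hp
    simp only [Finset.mem_coe, Finset.mem_filter, Finset.mem_product] at hp
    exact hp.1.1
  · intro p hp q hq h
    simp only [Finset.coe_filter, Set.mem_setOf_eq] at hp hq
    have : p.2 = q.2 := by
      have h1 := hp.2; have h2 := hq.2
      simp only at h
      nlinarith [h1, h2]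
    exact Prod.ext h this

lemma rsub_le_right (A B : Finset ℝ) (x : ℝ) : rsub A B x ≤ B.card := by
  apply Finset.card_le_card_of_injOn (fun p => p.2)
  · intro p hp
    simp only [Finset.mem_coe, Finset.mem_filter, Finset.mem_product] at hp
    exact hp.1.2
  · intro p hp q hq h
    simp only [Finset.coe_filter, Set.mem_setOf_eq] at hp hq
    have : p.1 = q.1 := by
      have h1 := hp.2; have h2 := hq.2
      simp only at h
      nlinarith [h1, h2]
    exact Prod.ext this h

lemma sum_rsub (A B : Finset ℝ) : ∑ x ∈ A - B, rsub A B x = A.card * B.card := by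
  rw [← Finset.card_product]
  exact (Finset.card_eq_sum_card_fiberwise (fun p hp => by
    rw [Finset.mem_coe, Finset.mem_product] at hp
    exact Finset.sub_mem_sub hp.1 hp.2)).symm

lemma rsub_eq_zero (A B : Finset ℝ) (x : ℝ) (h : x ∉ A - B) : rsub A B x = 0 := by
  rw [rsub, Finset.card_eq_zero, Finset.filter_eq_empty_iff]
  intro p hp hx
  rw [Finset.mem_product] at hp
  exact h (hx ▸ Finset.sub_mem_sub hp.1 hp.2)

lemma E4plus_le (A B : Finset ℝ) : E4plus A B ≤ A.card ^ 2 * B.card ^ 3 := by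
  calc E4plus A B ≤ ∑ x ∈ A - B, (A.card * B.card ^ 2) * rsub A B x := by
        apply Finset.sum_le_sum
        intro x _
        have h1 := rsub_le_left A B x
        have h2 := rsub_le_right A B x
        calc rsub A B x ^ 4 = (rsub A B x * rsub A B x ^ 2) * rsub A B x := by ring
          _ ≤ (A.card * B.card ^ 2) * rsub A B x := by
              apply Nat.mul_le_mul_right
              exact Nat.mul_le_mul h1 (Nat.pow_le_pow_left h2 2)
    _ = (A.card * B.card ^ 2) * ∑ x ∈ A - B, rsub A B x := by rw [Finset.mul_sum]
    _ = A.card ^ 2 * B.card ^ 3 := by rw [sum_rsub]; ring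

lemma d4plus_bdd (A : Finset ℝ) :
    BddAbove (Set.range fun B : {B : Finset ℝ // B.Nonempty} =>
      (E4plus A B.1 : ℝ) / (A.card * (B.1.card : ℝ) ^ 3)) := by
  refine ⟨(A.card : ℝ), ?_⟩
  rintro _ ⟨B, rfl⟩
  rcases Nat.eq_zero_or_pos A.card with h | h
  · have hAB : A - B.1 = ∅ := by
      rw [Finset.card_eq_zero] at h
      simp [h, Finset.sub_eq_empty]
    have : E4plus A B.1 = 0 := by simp [E4plus, hAB]
    simp [this]
  · have hBc : 0 < (B.1.card : ℝ) := by exact_mod_cast B.2.card_pos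
    have hAc : 0 < (A.card : ℝ) := by exact_mod_cast h
    rw [div_le_iff₀ (by positivity)]
    have := E4plus_le A B.1
    calc (E4plus A B.1 : ℝ) ≤ (A.card : ℝ) ^ 2 * (B.1.card : ℝ) ^ 3 := by exact_mod_cast this
      _ = (A.card : ℝ) * ((A.card : ℝ) * (B.1.card : ℝ) ^ 3) := by ring

lemma le_d4plus (A B : Finset ℝ) (hB : B.Nonempty) :
    (E4plus A B : ℝ) / (A.card * (B.card : ℝ) ^ 3) ≤ d4plus A :=
  le_ciSup (d4plus_bdd A) ⟨B, hB⟩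

end aux

theorem stmt12 (A B C : Finset ℝ) (hA : A.Nonempty) (hB : B.Nonempty) (hC : C.Nonempty)
    (σ₁ σ₂ σ₃ : ℝ) (h1 : σ₁ ≠ 0) (h2 : σ₂ ≠ 0) (h3 : σ₃ ≠ 0) :
    ((((A ×ˢ B ×ˢ C).filter
        (fun p => σ₁ * p.1 + σ₂ * p.2.1 + σ₃ * p.2.2 = 0)).card : ℝ)) ≤
      (C.card : ℝ) ^ ((3:ℝ)/4) *
        (d4plus A * (A.card : ℝ) * (B.card : ℝ) ^ 3) ^ ((1:ℝ)/4) := by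
  classical
  set τ : ℝ := -σ₂ / σ₁ with hτdef
  have hτ : τ ≠ 0 := by
    simp [hτdef, div_ne_zero_iff, h1, h2]
  set B' : Finset ℝ := B.image (fun b => τ * b) with hB'def
  have hinj : Function.Injective (fun b : ℝ => τ * b) :=
    fun x y h => by field_simp [hτ] at h; exact h
  have hcardB' : B'.card = B.card := Finset.card_image_of_injective B hinj
  have hB' : B'.Nonempty := hB.image _
  set g : ℝ → ℝ := fun c => -σ₃ / σ₁ * c with hgdef
  -- Step A: counting identity
  have key : ((A ×ˢ B ×ˢ C).filter
      (fun p => σ₁ * p.1 + σ₂ * p.2.1 + σ₃ * p.2.2 = 0)).card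
      = ∑ c ∈ C, rsub A B' (g c) := by
    rw [Finset.card_eq_sum_card_fiberwise
      (f := fun p : ℝ × ℝ × ℝ => p.2.2) (t := C)
      (fun p hp => by
        simp only [Finset.mem_coe, Finset.mem_filter, Finset.mem_product] at hp
        exact hp.1.2.2)]
    refine Finset.sum_congr rfl fun c hc => ?_
    rw [rsub]
    apply Finset.card_bij (fun p _ => (p.1, τ * p.2.1))
    · intro p hp
      simp only [Finset.mem_filter, Finset.mem_filter, Finset.mem_product] at hp ⊢
      obtain ⟨⟨⟨ha, hb, _⟩, heq⟩, hc2⟩ := hp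
      refine ⟨⟨ha, Finset.mem_image_of_mem _ hb⟩, ?_⟩
      subst hc2
      simp only [hτdef, hgdef]
      field_simp
      linarith [heq]
    · intro p hp q hq h
      simp only [Finset.mem_filter, Finset.mem_product] at hp hq
      simp only [Prod.mk.injEq] at h
      exact Prod.ext h.1 (Prod.ext (hinj h.2) (hp.2.trans hq.2.symm))
    · intro q hq
      simp only [Finset.mem_filter, Finset.mem_product, hB'def, Finset.mem_image] at hq
      obtain ⟨⟨ha, b, hb, hbq⟩, heq⟩ := hq
      refine ⟨(q.1, b, c), ?_, ?_⟩
      · refine Finset.mem_filter.mpr ⟨Finset.mem_filter.mpr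
          ⟨Finset.mem_product.mpr ⟨ha, Finset.mem_product.mpr ⟨hb, hc⟩⟩, ?_⟩, rfl⟩
        have : q.1 - τ * b = g c := by rw [hbq]; exact heq
        simp only [hτdef, hgdef] at this
        field_simp at this
        show σ₁ * q.1 + σ₂ * b + σ₃ * c = 0
        linarith [this]
      · exact Prod.ext rfl hbq
  -- Step B: sum of fourth powers bounded by E4plus
  have hsum4 : ∑ c ∈ C, (rsub A B' (g c)) ^ 4 ≤ E4plus A B' := by
    have hginj : Set.InjOn g C := fun x _ y _ h => by
      have hs : (-σ₃ / σ₁ : ℝ) ≠ 0 := by simp [div_ne_zero_iff, h1, h3]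
      simp only [hgdef] at h
      exact mul_left_cancel₀ hs h
    rw [← Finset.sum_image (f := fun x => rsub A B' x ^ 4) (fun x hx y hy h => hginj hx hy h)]
    rw [← Finset.sum_filter_of_ne (p := fun x => x ∈ A - B')
      (fun x _ hne => by
        by_contra hmem
        exact hne (by rw [rsub_eq_zero A B' x hmem]; norm_num))]
    apply Finset.sum_le_sum_of_subset
    intro x hx
    exact (Finset.mem_filter.mp hx).2
  -- Step C: E4plus bounded via d4plus
  have hACpos : 0 < (A.card : ℝ) := by exact_mod_cast hA.card_pos
  have hBCpos : 0 < (B.card : ℝ) := by exact_mod_cast hB.card_pos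
  have hE4le : (E4plus A B' : ℝ) ≤ d4plus A * (A.card : ℝ) * (B.card : ℝ) ^ 3 := by
    have := le_d4plus A B' hB'
    rw [hcardB'] at this
    rw [div_le_iff₀ (by positivity)] at this
    linarith [this]
  set X : ℝ := d4plus A * (A.card : ℝ) * (B.card : ℝ) ^ 3 with hXdef
  have hX : 0 ≤ X := le_trans (by positivity) hE4le
  -- Step D: Hölder and rpow finish
  set S : ℝ := ∑ c ∈ C, ((rsub A B' (g c) : ℝ)) with hSdef
  have hS : 0 ≤ S := Finset.sum_nonneg fun c _ => by positivity
  have hHolder : S ^ 4 ≤ (C.card : ℝ) ^ 3 * X := by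
    have h1' : S ^ 4 ≤ (C.card : ℝ) ^ 3 * ∑ c ∈ C, ((rsub A B' (g c) : ℝ)) ^ 4 :=
      pow_sum_le_card_mul_sum_pow (fun c _ => by positivity) 3
    have h2' : (∑ c ∈ C, ((rsub A B' (g c) : ℝ)) ^ 4) ≤ X := by
      refine le_trans ?_ hE4le
      exact_mod_cast hsum4
    calc S ^ 4 ≤ (C.card : ℝ) ^ 3 * ∑ c ∈ C, ((rsub A B' (g c) : ℝ)) ^ 4 := h1'
      _ ≤ (C.card : ℝ) ^ 3 * X := by
          apply mul_le_mul_of_nonneg_left h2' (by positivity)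
  have hcount : (((A ×ˢ B ×ˢ C).filter
      (fun p => σ₁ * p.1 + σ₂ * p.2.1 + σ₃ * p.2.2 = 0)).card : ℝ) = S := by
    rw [key, hSdef]
    push_cast
    rfl
  rw [hcount]
  calc S = (S ^ (4:ℕ)) ^ ((1:ℝ)/4) := by
        rw [← Real.rpow_natCast S 4, ← Real.rpow_mul hS]
        norm_num
    _ ≤ ((C.card : ℝ) ^ 3 * X) ^ ((1:ℝ)/4) := by
        apply Real.rpow_le_rpow (by positivity) hHolder (by norm_num)
    _ = (C.card : ℝ) ^ ((3:ℝ)/4) * X ^ ((1:ℝ)/4) := by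
        rw [Real.mul_rpow (by positivity) hX,
          ← Real.rpow_natCast ((C.card : ℝ)) 3, ← Real.rpow_mul (by positivity)]
        norm_num
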